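/- For permutations σ < π in the classical permutation pattern order, with σ of length m and π of length n, μ(σ,π) = (−1)^{n−m} · NE(σ,π) + Σ_{λ : σ ≤ λ < π} μ(σ,λ) · μ(0̂,1̂), where the second factor in each summand is the Möbius function of the bounded poset R̂*(λ,π), and the sum is over all permutations λ with σ ≤ λ ≤ π and λ ≠ π. -/

import Mathlib

attribute [local instance] Classical.propDecidable

noncomputable instance {α : Type*} [Fintype α] : Fintype (WithBot α) :=
  inferInstanceAs (Fintype (Option α))
noncomputable instance {α : Type*} [Fintype α] : Fintype (WithTop α) :=
  inferInstanceAs (Fintype (Option α))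

/-- The Möbius function of a finite partial order. -/
noncomputable def mob {α : Type*} [Preorder α] [Fintype α] (a b : α) : ℤ :=
  letI := Classical.decEq α
  letI : @DecidableRel α α (· ≤ ·) := Classical.decRel _
  letI : @DecidableRel α α (· < ·) := Classical.decRel _
  letI : LocallyFiniteOrder α := Fintype.toLocallyFiniteOrder
  IncidenceAlgebra.mu ℤ a b

/-- The bounded poset obtained by adjoining a new minimum `0̂` and maximum `1̂`. -/
abbrev Bd (α : Type*) := WithBot (WithTop α)

/-- The Möbius number `μ(0̂,1̂)` of a finite poset with a new minimum and maximum adjoined. -/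
noncomputable def mobHat (α : Type*) [Preorder α] [Fintype α] : ℤ :=
  mob (⊥ : Bd α) ⊤

/-- Classical pattern containment for (reduced) permutations. -/
def PermLE {m n : ℕ} (σ : Equiv.Perm (Fin m)) (π : Equiv.Perm (Fin n)) : Prop :=
  ∃ f : Fin m → Fin n, StrictMono f ∧ ∀ i j : Fin m, σ i < σ j ↔ π (f i) < π (f j)

/-- Strict classical pattern containment. -/
def PermLT {m n : ℕ} (σ : Equiv.Perm (Fin m)) (π : Equiv.Perm (Fin n)) : Prop :=
  PermLE σ π ∧ ¬ PermLE π σ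

/-- `red π S` is the permutation of length `S.card` order-isomorphic to `π`
restricted to the set of positions `S`. -/
noncomputable def red {n : ℕ} (π : Equiv.Perm (Fin n)) (S : Finset (Fin n)) :
    Equiv.Perm (Fin S.card) := by
  classical
  have hcard : (S.image fun x => π x).card = S.card :=
    Finset.card_image_of_injective _ π.injective
  refine Equiv.ofBijective (fun i =>
    ((S.image fun x => π x).orderIsoOfFin hcard).symm
      ⟨π (S.orderIsoOfFin rfl i), Finset.mem_image_of_mem _ (S.orderIsoOfFin rfl i).2⟩)
    (Finite.injective_iff_bijective.mp ?_)
  intro i j hij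
  have h2 := congrArg (fun z => ((((S.image fun x => π x).orderIsoOfFin hcard) z : Fin n)))
    hij
  simp only [OrderIso.apply_symm_apply] at h2
  have h4 := π.injective h2
  have h5 : (S.orderIsoOfFin rfl) i = (S.orderIsoOfFin rfl) j := Subtype.ext h4
  exact (S.orderIsoOfFin rfl).injective h5

/-- `S` is an embedding (occurrence set) of `σ` in `π`, i.e. `red(π|_S) = σ`. -/
def IsEmb {n m : ℕ} (π : Equiv.Perm (Fin n)) (S : Finset (Fin n))
    (σ : Equiv.Perm (Fin m)) : Prop :=
  ∃ h : S.card = m, ∀ i : Fin S.card, (red π S i : ℕ) = (σ (Fin.cast h i) : ℕ)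

/-- `E(σ,π)`: the number of embeddings of `σ` in `π`. -/
noncomputable def permE {m n : ℕ} (σ : Equiv.Perm (Fin m)) (π : Equiv.Perm (Fin n)) : ℕ :=
  (Finset.univ.filter fun S : Finset (Fin n) => IsEmb π S σ).card

/-- The poset `A*(λ,π)` of proper position sets `S ⊊ Fin n` with `λ ≤ red(π|_S)`,
ordered by inclusion. -/
abbrev AstarP {n k : ℕ} (π : Equiv.Perm (Fin n)) (lam : Equiv.Perm (Fin k)) :=
  {S : Finset (Fin n) // S ≠ Finset.univ ∧ PermLE lam (red π S)}

/-- The predecessor position. -/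
def predPos {n : ℕ} (p : Fin n) : Fin n :=
  ⟨p.1 - 1, lt_of_le_of_lt (Nat.sub_le p.1 1) p.2⟩

/-- `p` lies in the tail of an adjacency of `π`: `p` is not the first position and the
values of `π` at `p−1` and `p` differ by exactly one (consecutive positions in a maximal
block on which the values increase by exactly 1 at each step or decrease by exactly 1 at
each step). -/
def tailPos {n : ℕ} (π : Equiv.Perm (Fin n)) (p : Fin n) : Prop :=
  0 < p.1 ∧ ((π p : ℕ) = (π (predPos p) : ℕ) + 1 ∨ (π (predPos p) : ℕ) = (π p : ℕ) + 1)

/-- A normal embedding: an embedding containing every position in the tail of an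
adjacency of `π`. -/
def IsNormalEmb {n m : ℕ} (π : Equiv.Perm (Fin n)) (S : Finset (Fin n))
    (σ : Equiv.Perm (Fin m)) : Prop :=
  IsEmb π S σ ∧ ∀ p : Fin n, tailPos π p → p ∈ S

/-- `NE(σ,π)`: the number of normal embeddings of `σ` in `π`. -/
noncomputable def permNE {m n : ℕ} (σ : Equiv.Perm (Fin m)) (π : Equiv.Perm (Fin n)) : ℕ :=
  (Finset.univ.filter fun S : Finset (Fin n) => IsNormalEmb π S σ).card

/-- A set of positions is representative if within every adjacency of `π` its positions
form a suffix of the adjacency. -/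
def ReprP {n : ℕ} (π : Equiv.Perm (Fin n)) (S : Finset (Fin n)) : Prop :=
  ∀ p : Fin n, tailPos π p → predPos p ∈ S → p ∈ S

/-- The poset `R*(λ,π)` of representative proper position sets `S ⊊ Fin n` with
`λ ≤ red(π|_S)`, ordered by inclusion. -/
abbrev RstarP {n k : ℕ} (π : Equiv.Perm (Fin n)) (lam : Equiv.Perm (Fin k)) :=
  {S : Finset (Fin n) // S ≠ Finset.univ ∧ ReprP π S ∧ PermLE lam (red π S)}

section AuxPerm
open Finset

lemma strictMono_fin_id {a : ℕ} {f : Fin a → Fin a} (hf : StrictMono f) : f = id := by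
  have hinj : Function.Injective f := hf.injective
  have hsurj : Function.Surjective f := Finite.injective_iff_surjective.mp hinj
  exact (hf.range_inj strictMono_id).1
    (by rw [Set.range_id, Set.range_eq_univ.mpr hsurj])

lemma perm_eq_of_iff_lt {a : ℕ} {σ τ : Equiv.Perm (Fin a)}
    (h : ∀ i j, σ i < σ j ↔ τ i < τ j) : σ = τ := by
  have hg : StrictMono (fun x => τ (σ.symm x)) := by
    intro x y hxy
    exact (h (σ.symm x) (σ.symm y)).1 (by simpa using hxy)
  have hid := strictMono_fin_id hg
  ext i
  have h2 : τ (σ.symm (σ i)) = σ i := congrFun hid (σ i)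
  simp only [Equiv.symm_apply_apply] at h2
  exact congrArg Fin.val h2.symm

lemma permLE_refl {a : ℕ} (σ : Equiv.Perm (Fin a)) : PermLE σ σ :=
  ⟨id, strictMono_id, fun _ _ => Iff.rfl⟩

lemma permLE_trans {a b c : ℕ} {σ : Equiv.Perm (Fin a)} {τ : Equiv.Perm (Fin b)}
    {ρ : Equiv.Perm (Fin c)} (h1 : PermLE σ τ) (h2 : PermLE τ ρ) : PermLE σ ρ := by
  obtain ⟨f, hf, hf2⟩ := h1
  obtain ⟨g, hg, hg2⟩ := h2
  exact ⟨g ∘ f, hg.comp hf, fun i j => (hf2 i j).trans (hg2 (f i) (f j))⟩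

lemma permLE_card_le {a b : ℕ} {σ : Equiv.Perm (Fin a)} {τ : Equiv.Perm (Fin b)}
    (h : PermLE σ τ) : a ≤ b := by
  obtain ⟨f, hf, -⟩ := h
  simpa using Fintype.card_le_of_injective f hf.injective

lemma permLE_antisymm {a : ℕ} {σ τ : Equiv.Perm (Fin a)} (h : PermLE σ τ) : σ = τ := by
  obtain ⟨f, hf, hf2⟩ := h
  have := strictMono_fin_id hf
  subst this
  exact perm_eq_of_iff_lt hf2

lemma red_lt_iff {n : ℕ} (π : Equiv.Perm (Fin n)) (S : Finset (Fin n)) (i j : Fin S.card) :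
    red π S i < red π S j ↔ π ((S.orderIsoOfFin rfl) i) < π ((S.orderIsoOfFin rfl) j) := by
  unfold red
  rw [Equiv.ofBijective_apply, Equiv.ofBijective_apply,
    ← OrderIso.lt_iff_lt ((S.image fun x => π x).orderIsoOfFin
      (Finset.card_image_of_injective _ π.injective))]
  simp only [OrderIso.apply_symm_apply]
  exact Subtype.mk_lt_mk

lemma red_le_self {n : ℕ} (π : Equiv.Perm (Fin n)) (S : Finset (Fin n)) :
    PermLE (red π S) π := by
  refine ⟨fun i => ((S.orderIsoOfFin rfl) i : Fin n), ?_, fun i j => red_lt_iff π S i j⟩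
  intro i j hij
  exact Subtype.coe_lt_coe.2 ((S.orderIsoOfFin rfl).lt_iff_lt.2 hij)

lemma red_mono {n : ℕ} (π : Equiv.Perm (Fin n)) {T S : Finset (Fin n)} (hTS : T ⊆ S) :
    PermLE (red π T) (red π S) := by
  refine ⟨fun i => (S.orderIsoOfFin rfl).symm
    ⟨((T.orderIsoOfFin rfl) i : Fin n), hTS (T.orderIsoOfFin rfl i).2⟩, ?_, ?_⟩
  · intro i j hij
    apply (S.orderIsoOfFin rfl).symm.lt_iff_lt.2
    exact Subtype.mk_lt_mk.2 (Subtype.coe_lt_coe.2 ((T.orderIsoOfFin rfl).lt_iff_lt.2 hij))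
  · intro i j
    rw [red_lt_iff, red_lt_iff]
    simp only [OrderIso.apply_symm_apply]

lemma isEmb_iff {n m : ℕ} (π : Equiv.Perm (Fin n)) (T : Finset (Fin n))
    (σ : Equiv.Perm (Fin m)) :
    IsEmb π T σ ↔ PermLE σ (red π T) ∧ PermLE (red π T) σ := by
  constructor
  · rintro ⟨h, hval⟩
    constructor
    · refine ⟨fun i => Fin.cast h.symm i, fun i j hij => hij, fun i j => ?_⟩
      have hi := hval (Fin.cast h.symm i)
      have hj := hval (Fin.cast h.symm j)
      simp only [Fin.cast_cast, Fin.cast_eq_self] at hi hj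
      rw [Fin.lt_def, Fin.lt_def, hi, hj]
    · refine ⟨fun i => Fin.cast h i, fun i j hij => hij, fun i j => ?_⟩
      rw [Fin.lt_def, Fin.lt_def, hval i, hval j]
  · rintro ⟨⟨f, hf, hf2⟩, h2⟩
    have hm : m ≤ T.card := by simpa using Fintype.card_le_of_injective f hf.injective
    have hc : T.card = m := le_antisymm (permLE_card_le h2) hm
    refine ⟨hc, ?_⟩
    have hfid : ((Fin.cast hc) ∘ f) = id :=
      strictMono_fin_id (fun i j hij => hf hij)
    have hfe : ∀ i, f i = Fin.cast hc.symm i := by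
      intro i
      have h3 : ((f i : ℕ)) = (i : ℕ) := congrArg Fin.val (congrFun hfid i)
      exact Fin.ext h3
    set e : Fin m ≃ Fin T.card := finCongr hc.symm with he
    have hred : red π T = e.permCongr σ := by
      apply perm_eq_of_iff_lt
      intro i j
      have := hf2 (e.symm i) (e.symm j)
      rw [hfe, hfe] at this
      have hei : (Fin.cast hc.symm (e.symm i)) = i := Fin.ext rfl
      have hej : (Fin.cast hc.symm (e.symm j)) = j := Fin.ext rfl
      rw [hei, hej] at this
      rw [← this]
      exact Iff.rfl
    intro i
    rw [hred]
    rfl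

lemma isEmb_card {n m : ℕ} {π : Equiv.Perm (Fin n)} {T : Finset (Fin n)}
    {σ : Equiv.Perm (Fin m)} (h : IsEmb π T σ) : T.card = m := h.1

end AuxPerm
section AuxMob
open Finset

lemma mob_self {α : Type*} [PartialOrder α] [Fintype α] (a : α) : mob a a = 1 := by
  letI := Classical.decEq α
  letI : @DecidableRel α α (· ≤ ·) := Classical.decRel _
  letI : @DecidableRel α α (· < ·) := Classical.decRel _
  letI : LocallyFiniteOrder α := Fintype.toLocallyFiniteOrder
  exact IncidenceAlgebra.mu_self a

lemma mob_sum {α : Type*} [PartialOrder α] [Fintype α] (a b : α) :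
    ∑ x ∈ Finset.univ.filter (fun x => a ≤ x ∧ x ≤ b), mob a x
      = if a = b then 1 else 0 := by
  letI := Classical.decEq α
  letI : @DecidableRel α α (· ≤ ·) := Classical.decRel _
  letI : @DecidableRel α α (· < ·) := Classical.decRel _
  letI : LocallyFiniteOrder α := Fintype.toLocallyFiniteOrder
  have key := IncidenceAlgebra.sum_Icc_mu_right (𝕜 := ℤ) (a := a) (b := b)
  have h2 : Finset.Icc a b = Finset.univ.filter (fun x => a ≤ x ∧ x ≤ b) := by
    ext x; simp [Finset.mem_Icc]
  rw [h2] at key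
  convert key using 2
  rfl

lemma mob_sum' {α : Type*} [PartialOrder α] [Fintype α] (a b : α) :
    ∑ x : α, (if a ≤ x ∧ x ≤ b then mob a x else 0) = if a = b then 1 else 0 := by
  rw [← Finset.sum_filter]
  exact mob_sum a b

lemma bd_sum {β : Type*} [Fintype β] (f : Bd β → ℤ) :
    ∑ x : Bd β, f x = f ⊥ + (f ⊤ + ∑ b : β, f ((b : WithTop β) : Bd β)) := by
  have h1 : ∑ x : Bd β, f x = ∑ x : Option (WithTop β), f x := rfl
  rw [h1, univ_option]; erw [Finset.sum_insertNone]
  congr 1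
  have h2 : ∑ x : WithTop β, f (some x) = ∑ x : Option β, f (some x) := rfl
  rw [h2, univ_option]; erw [Finset.sum_insertNone]
  rfl

lemma top_not_le_coe {β : Type*} [PartialOrder β] (b : β) :
    ¬ ((⊤ : Bd β) ≤ ((b : WithTop β) : Bd β)) := by
  intro hle
  have h1 : (⊤ : WithTop β) ≤ (b : WithTop β) := WithBot.coe_le_coe.1 hle
  exact WithTop.coe_ne_top (top_le_iff.1 h1)

lemma mobhat_eq {β : Type*} [PartialOrder β] [Fintype β] :
    mobHat β = -1 - ∑ b : β, mob (⊥ : Bd β) ((b : WithTop β) : Bd β) := by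
  have key := mob_sum' (⊥ : Bd β) (⊤ : Bd β)
  rw [if_neg (by exact fun h => WithBot.bot_ne_coe h)] at key
  rw [bd_sum] at key
  simp only [le_top, bot_le, and_self, if_true, true_and] at key
  rw [mob_self] at key
  unfold mobHat
  linarith

lemma mob_bd_rec {β : Type*} [PartialOrder β] [Fintype β] (b : β) :
    ∑ c : β, (if c ≤ b then mob (⊥ : Bd β) ((c : WithTop β) : Bd β) else 0) = -1 := by
  have key := mob_sum' (⊥ : Bd β) ((b : WithTop β) : Bd β)
  rw [if_neg (by exact fun h => WithBot.bot_ne_coe h)] at key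
  rw [bd_sum] at key
  simp only [bot_le, true_and, le_refl, and_self, if_true] at key
  rw [if_neg (top_not_le_coe b), mob_self] at key
  have h3 : ∀ c : β, (if ((c : WithTop β) : Bd β) ≤ ((b : WithTop β) : Bd β) then
      mob (⊥ : Bd β) ((c : WithTop β) : Bd β) else 0)
      = (if c ≤ b then mob (⊥ : Bd β) ((c : WithTop β) : Bd β) else 0) := by
    intro c
    congr 1
    simp [WithBot.coe_le_coe, WithTop.coe_le_coe]
  rw [Finset.sum_congr rfl (fun c _ => h3 c)] at key
  linarith

lemma mobhat_empty {β : Type*} [PartialOrder β] [Fintype β] (h : IsEmpty β) :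
    mobHat β = -1 := by
  rw [mobhat_eq]
  rw [Finset.univ_eq_empty, Finset.sum_empty]
  ring

end AuxMob
section AuxComb
open Finset

lemma norm_reprP {n : ℕ} {π : Equiv.Perm (Fin n)} {S : Finset (Fin n)}
    (h : ∀ p, tailPos π p → p ∈ S) : ReprP π S :=
  fun p hp _ => h p hp

lemma repr_univ_of_heads {n : ℕ} {π : Equiv.Perm (Fin n)} {T : Finset (Fin n)}
    (hT : ReprP π T) (hB : ∀ p, ¬ tailPos π p → p ∈ T) : T = Finset.univ := by
  have key : ∀ k : ℕ, ∀ p : Fin n, p.1 = k → p ∈ T := by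
    intro k
    induction k using Nat.strong_induction_on with
    | _ k ih =>
      intro p hp
      by_cases htail : tailPos π p
      · refine hT p htail (ih (predPos p).1 ?_ (predPos p) rfl)
        subst hp
        exact Nat.sub_lt htail.1 one_pos
      · exact hB p htail
  exact Finset.eq_univ_iff_forall.2 (fun p => key p.1 p rfl)

lemma neg_one_pow_sub {a b : ℕ} (h : b ≤ a) :
    (-1 : ℤ) ^ (a - b) = (-1) ^ a * (-1) ^ b := by
  have h2 : a + b = (a - b) + 2 * b := by omega
  have h3 : (-1 : ℤ) ^ (a + b) = (-1) ^ (a - b) * ((-1) ^ 2) ^ b := by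
    rw [← pow_mul, ← pow_add, h2]
  simpa [pow_add] using h3.symm

lemma alt_sum_subsets {n : ℕ} {B : Finset (Fin n)} (hB : B ≠ Finset.univ) :
    ∑ S ∈ Finset.univ.filter (fun S : Finset (Fin n) => B ⊆ S), (-1 : ℤ) ^ S.card = 0 := by
  classical
  have hcompl : Bᶜ ≠ ∅ := by
    intro hc
    exact hB (by simpa using congrArg compl hc)
  have hrw : ∑ S ∈ Finset.univ.filter (fun S : Finset (Fin n) => B ⊆ S), (-1 : ℤ) ^ S.card
      = ∑ K ∈ Bᶜ.powerset, (-1 : ℤ) ^ (B ∪ K).card := by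
    refine Finset.sum_nbij' (fun S => S \ B) (fun K => B ∪ K) ?_ ?_ ?_ ?_ ?_
    · intro S hS
      simp only [Finset.mem_filter, Finset.mem_univ, true_and] at hS
      simp only [Finset.mem_powerset]
      intro x hx
      simp only [Finset.mem_sdiff] at hx
      simp [hx.2]
    · intro K hK
      simp only [Finset.mem_powerset] at hK
      simp only [Finset.mem_filter, Finset.mem_univ, true_and]
      exact Finset.subset_union_left
    · intro S hS
      simp only [Finset.mem_filter, Finset.mem_univ, true_and] at hS
      exact Finset.union_sdiff_of_subset hS
    · intro K hK
      simp only [Finset.mem_powerset] at hK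
      ext x
      simp only [Finset.mem_sdiff, Finset.mem_union]
      constructor
      · rintro ⟨h1 | h1, h2⟩
        · exact absurd h1 h2
        · exact h1
      · intro hx
        have := hK hx
        simp only [Finset.mem_compl] at this
        exact ⟨Or.inr hx, this⟩
    · intro S hS
      simp only [Finset.mem_filter, Finset.mem_univ, true_and] at hS
      rw [Finset.union_sdiff_of_subset hS]
  rw [hrw]
  have hcard : ∀ K ∈ Bᶜ.powerset, (-1 : ℤ) ^ (B ∪ K).card = (-1) ^ B.card * (-1) ^ K.card := by
    intro K hK
    simp only [Finset.mem_powerset] at hK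
    rw [Finset.card_union_of_disjoint, pow_add]
    exact Finset.disjoint_left.2 fun x hx1 hx2 => by
      have := hK hx2; simp only [Finset.mem_compl] at this; exact this hx1
  rw [Finset.sum_congr rfl hcard, ← Finset.mul_sum, Finset.sum_powerset_neg_one_pow_card,
    if_neg hcompl, mul_zero]

lemma alt_sum_proper {n : ℕ} {B : Finset (Fin n)} (hB : B ≠ Finset.univ) :
    ∑ S ∈ Finset.univ.filter (fun S : Finset (Fin n) => B ⊆ S ∧ S ≠ Finset.univ),
      (-1 : ℤ) ^ (n - S.card) = -1 := by
  classical
  have hsplit : Finset.univ.filter (fun S : Finset (Fin n) => B ⊆ S)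
      = insert Finset.univ (Finset.univ.filter
          (fun S : Finset (Fin n) => B ⊆ S ∧ S ≠ Finset.univ)) := by
    ext S
    simp only [Finset.mem_filter, Finset.mem_univ, true_and, Finset.mem_insert]
    constructor
    · intro hS
      by_cases hSu : S = Finset.univ
      · exact Or.inl hSu
      · exact Or.inr ⟨hS, hSu⟩
    · rintro (rfl | ⟨h1, -⟩)
      · exact Finset.subset_univ B
      · exact h1
  have hnotmem : Finset.univ ∉ Finset.univ.filter
      (fun S : Finset (Fin n) => B ⊆ S ∧ S ≠ Finset.univ) := by
    simp
  have hzero : ∑ S ∈ Finset.univ.filter (fun S : Finset (Fin n) => B ⊆ S),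
      (-1 : ℤ) ^ (n - S.card) = 0 := by
    have hc : ∀ S ∈ Finset.univ.filter (fun S : Finset (Fin n) => B ⊆ S),
        (-1 : ℤ) ^ (n - S.card) = (-1) ^ n * (-1) ^ S.card := by
      intro S _
      exact neg_one_pow_sub (by simpa using S.card_le_univ)
    rw [Finset.sum_congr rfl hc, ← Finset.mul_sum, alt_sum_subsets hB, mul_zero]
  rw [hsplit, Finset.sum_insert hnotmem] at hzero
  have huniv : (n - (Finset.univ : Finset (Fin n)).card) = 0 := by simp
  rw [huniv, pow_zero] at hzero
  linarith
end AuxComb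

section AuxG
open Finset

noncomputable def gfun {n k : ℕ} (π : Equiv.Perm (Fin n)) (lam : Equiv.Perm (Fin k))
    (S : Finset (Fin n)) : ℤ :=
  if hS : S ≠ Finset.univ ∧ ReprP π S ∧ PermLE lam (red π S) then
    mob (⊥ : Bd (RstarP π lam))
      (((⟨S, hS⟩ : RstarP π lam) : WithTop (RstarP π lam)) : Bd (RstarP π lam))
  else 0

lemma gfun_sum {n k : ℕ} (π : Equiv.Perm (Fin n)) (lam : Equiv.Perm (Fin k)) :
    ∑ S : Finset (Fin n), gfun π lam S
      = ∑ b : RstarP π lam, mob (⊥ : Bd (RstarP π lam))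
          ((b : WithTop (RstarP π lam)) : Bd (RstarP π lam)) := by
  classical
  have h0 : ∑ S ∈ Finset.univ.filter
      (fun S : Finset (Fin n) => S ≠ Finset.univ ∧ ReprP π S ∧ PermLE lam (red π S)),
      gfun π lam S = ∑ S : Finset (Fin n), gfun π lam S := by
    apply Finset.sum_subset (Finset.filter_subset _ _)
    intro S _ hS
    simp only [Finset.mem_filter, Finset.mem_univ, true_and] at hS
    exact dif_neg hS
  have h1 : ∑ S ∈ Finset.univ.filter
      (fun S : Finset (Fin n) => S ≠ Finset.univ ∧ ReprP π S ∧ PermLE lam (red π S)),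
      gfun π lam S = ∑ b : RstarP π lam, gfun π lam b.1 :=
    Finset.sum_subtype _ (by simp) _
  rw [← h0, h1]
  apply Finset.sum_congr rfl
  intro b _
  have : gfun π lam b.1 = mob (⊥ : Bd (RstarP π lam))
      (((⟨b.1, b.2⟩ : RstarP π lam) : WithTop (RstarP π lam)) : Bd (RstarP π lam)) :=
    dif_pos b.2
  rw [this]

lemma gfun_powerset_sum {n k : ℕ} (π : Equiv.Perm (Fin n)) (lam : Equiv.Perm (Fin k))
    {S : Finset (Fin n)}
    (hS : S ≠ Finset.univ ∧ ReprP π S ∧ PermLE lam (red π S)) :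
    ∑ T ∈ S.powerset, gfun π lam T = -1 := by
  classical
  have hrec := mob_bd_rec (β := RstarP π lam) ⟨S, hS⟩
  have h1 : ∑ T ∈ S.powerset, gfun π lam T
      = ∑ T : Finset (Fin n), (if T ⊆ S then gfun π lam T else 0) := by
    rw [← Finset.sum_filter]
    apply Finset.sum_congr
    · ext T; simp [Finset.mem_powerset]
    · intros; rfl
  have h2 : ∑ T : Finset (Fin n), (if T ⊆ S then gfun π lam T else 0)
      = ∑ T ∈ Finset.univ.filter
          (fun T : Finset (Fin n) => T ≠ Finset.univ ∧ ReprP π T ∧ PermLE lam (red π T)),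
          (if T ⊆ S then gfun π lam T else 0) := by
    symm
    apply Finset.sum_subset (Finset.filter_subset _ _)
    intro T _ hT
    simp only [Finset.mem_filter, Finset.mem_univ, true_and] at hT
    by_cases hTS : T ⊆ S
    · rw [if_pos hTS]; exact dif_neg hT
    · rw [if_neg hTS]
  have h3 : ∑ T ∈ Finset.univ.filter
      (fun T : Finset (Fin n) => T ≠ Finset.univ ∧ ReprP π T ∧ PermLE lam (red π T)),
      (if T ⊆ S then gfun π lam T else 0)
      = ∑ c : RstarP π lam, (if c.1 ⊆ S then gfun π lam c.1 else 0) :=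
    Finset.sum_subtype _ (by simp) _
  rw [h1, h2, h3, ← hrec]
  apply Finset.sum_congr rfl
  intro c _
  by_cases hc : c.1 ⊆ S
  · rw [if_pos hc, if_pos (show c ≤ ⟨S, hS⟩ from hc)]
    have : gfun π lam c.1 = mob (⊥ : Bd (RstarP π lam))
        (((⟨c.1, c.2⟩ : RstarP π lam) : WithTop (RstarP π lam)) : Bd (RstarP π lam)) :=
      dif_pos c.2
    rw [this]
  · rw [if_neg hc, if_neg (show ¬ (c ≤ ⟨S, hS⟩) from hc)]

lemma gfun_powerset_sum_zero {n k : ℕ} (π : Equiv.Perm (Fin n)) (lam : Equiv.Perm (Fin k))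
    {S : Finset (Fin n)} (hS : ¬ PermLE lam (red π S)) :
    ∑ T ∈ S.powerset, gfun π lam T = 0 := by
  apply Finset.sum_eq_zero
  intro T hT
  rw [Finset.mem_powerset] at hT
  apply dif_neg
  rintro ⟨-, -, h3⟩
  exact hS (permLE_trans h3 (red_mono π hT))

lemma deltaA {m n : ℕ} (σ : Equiv.Perm (Fin m)) (π : Equiv.Perm (Fin n))
    (mu : ∀ {a b : ℕ}, Equiv.Perm (Fin a) → Equiv.Perm (Fin b) → ℤ)
    (hmu_self : ∀ {a : ℕ} (τ : Equiv.Perm (Fin a)), mu τ τ = 1)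
    (hmu_rec : ∀ {a b : ℕ} (τ : Equiv.Perm (Fin a)) (ρ : Equiv.Perm (Fin b)),
      PermLT τ ρ → ∑ k ∈ Finset.range (b + 1), ∑ lam : Equiv.Perm (Fin k),
        (if PermLE τ lam ∧ PermLE lam ρ then mu τ lam else 0) = 0)
    (T : Finset (Fin n)) :
    ∑ k ∈ Finset.range (n + 1), ∑ lam : Equiv.Perm (Fin k),
      (if PermLE σ lam ∧ PermLE lam (red π T) then mu σ lam else 0)
      = if IsEmb π T σ then 1 else 0 := by
  classical
  have hTn : T.card ≤ n := by simpa using T.card_le_univ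
  by_cases hσT : PermLE σ (red π T)
  · by_cases hTσ : PermLE (red π T) σ
    · have hEmb : IsEmb π T σ := (isEmb_iff π T σ).2 ⟨hσT, hTσ⟩
      rw [if_pos hEmb]
      have hcard : T.card = m := hEmb.1
      have hmem : m ∈ Finset.range (n + 1) := by rw [Finset.mem_range]; omega
      rw [Finset.sum_eq_single_of_mem m hmem ?_]
      · rw [Finset.sum_eq_single_of_mem σ (Finset.mem_univ σ) ?_]
        · rw [if_pos ⟨permLE_refl σ, hσT⟩, hmu_self σ]
        · intro lam _ hne
          rw [if_neg]
          rintro ⟨h1, -⟩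
          exact hne (permLE_antisymm h1).symm
      · intro k _ hkm
        apply Finset.sum_eq_zero
        intro lam _
        rw [if_neg]
        rintro ⟨h1, h2⟩
        have hmk := permLE_card_le h1
        have hkm2 := permLE_card_le (permLE_trans h2 hTσ)
        omega
    · rw [if_neg (fun hEmb => hTσ ((isEmb_iff π T σ).1 hEmb).2)]
      have hrec := hmu_rec σ (red π T) ⟨hσT, hTσ⟩
      refine Eq.trans ?_ hrec
      symm
      apply Finset.sum_subset (Finset.range_subset_range.2 (by omega))
      intro k _ hk
      apply Finset.sum_eq_zero
      intro lam _
      rw [if_neg]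
      rintro ⟨-, h2⟩
      have := permLE_card_le h2
      rw [Finset.mem_range] at hk
      omega
  · rw [if_neg (fun hEmb => hσT ((isEmb_iff π T σ).1 hEmb).1)]
    apply Finset.sum_eq_zero
    intro k _
    apply Finset.sum_eq_zero
    intro lam _
    rw [if_neg]
    rintro ⟨h1, h2⟩
    exact hσT (permLE_trans h1 h2)

end AuxG
section AuxGG
open Finset

noncomputable def GGfun {m n : ℕ} (σ : Equiv.Perm (Fin m)) (π : Equiv.Perm (Fin n))
    (mu : ∀ {a b : ℕ}, Equiv.Perm (Fin a) → Equiv.Perm (Fin b) → ℤ)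
    (S : Finset (Fin n)) : ℤ :=
  ∑ k ∈ Finset.range (n + 1), ∑ lam : Equiv.Perm (Fin k),
    (if PermLE σ lam ∧ PermLE lam π then mu σ lam * gfun π lam S else 0)

noncomputable def cfun {n : ℕ} (π : Equiv.Perm (Fin n)) (S : Finset (Fin n)) : ℤ :=
  if (∀ p, tailPos π p → p ∈ S) then -(-1 : ℤ) ^ (n - S.card) else 0

lemma GG_zero {m n : ℕ} (σ : Equiv.Perm (Fin m)) (π : Equiv.Perm (Fin n))
    (mu : ∀ {a b : ℕ}, Equiv.Perm (Fin a) → Equiv.Perm (Fin b) → ℤ)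
    {S : Finset (Fin n)} (hS : ¬ (S ≠ Finset.univ ∧ ReprP π S)) :
    GGfun σ π mu S = 0 := by
  apply Finset.sum_eq_zero
  intro k _
  apply Finset.sum_eq_zero
  intro lam _
  have hg : gfun π lam S = 0 := by
    apply dif_neg
    rintro ⟨h1, h2, -⟩
    exact hS ⟨h1, h2⟩
  rw [hg, mul_zero, ite_self]

lemma GG_powerset {m n : ℕ} (σ : Equiv.Perm (Fin m)) (π : Equiv.Perm (Fin n))
    (mu : ∀ {a b : ℕ}, Equiv.Perm (Fin a) → Equiv.Perm (Fin b) → ℤ)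
    (hmu_self : ∀ {a : ℕ} (τ : Equiv.Perm (Fin a)), mu τ τ = 1)
    (hmu_rec : ∀ {a b : ℕ} (τ : Equiv.Perm (Fin a)) (ρ : Equiv.Perm (Fin b)),
      PermLT τ ρ → ∑ k ∈ Finset.range (b + 1), ∑ lam : Equiv.Perm (Fin k),
        (if PermLE τ lam ∧ PermLE lam ρ then mu τ lam else 0) = 0)
    {S : Finset (Fin n)} (hSu : S ≠ Finset.univ) (hSr : ReprP π S) :
    ∑ T ∈ S.powerset, GGfun σ π mu T = -(if IsEmb π S σ then 1 else 0) := by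
  classical
  unfold GGfun
  rw [Finset.sum_comm]
  have h1 : ∀ k ∈ Finset.range (n + 1),
      (∑ T ∈ S.powerset, ∑ lam : Equiv.Perm (Fin k),
        (if PermLE σ lam ∧ PermLE lam π then mu σ lam * gfun π lam T else 0))
      = ∑ lam : Equiv.Perm (Fin k), ∑ T ∈ S.powerset,
        (if PermLE σ lam ∧ PermLE lam π then mu σ lam * gfun π lam T else 0) :=
    fun k _ => Finset.sum_comm
  rw [Finset.sum_congr rfl h1]
  have h2 : ∀ k ∈ Finset.range (n + 1), ∀ lam : Equiv.Perm (Fin k),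
      (∑ T ∈ S.powerset,
        (if PermLE σ lam ∧ PermLE lam π then mu σ lam * gfun π lam T else 0))
      = -(if PermLE σ lam ∧ PermLE lam (red π S) then mu σ lam else 0) := by
    intro k _ lam
    by_cases hcond : PermLE σ lam ∧ PermLE lam π
    · simp only [if_pos hcond, ← Finset.mul_sum]
      by_cases hls : PermLE lam (red π S)
      · rw [gfun_powerset_sum π lam ⟨hSu, hSr, hls⟩,
          if_pos ⟨hcond.1, hls⟩]
        ring
      · rw [gfun_powerset_sum_zero π lam hls, if_neg (fun hc => hls hc.2), mul_zero, neg_zero]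
    · simp only [if_neg hcond, Finset.sum_const_zero]
      rw [if_neg, neg_zero]
      rintro ⟨ha, hb⟩
      exact hcond ⟨ha, permLE_trans hb (red_le_self π S)⟩
  calc ∑ k ∈ Finset.range (n + 1), ∑ lam : Equiv.Perm (Fin k),
        (∑ T ∈ S.powerset,
          (if PermLE σ lam ∧ PermLE lam π then mu σ lam * gfun π lam T else 0))
      = ∑ k ∈ Finset.range (n + 1), ∑ lam : Equiv.Perm (Fin k),
          -(if PermLE σ lam ∧ PermLE lam (red π S) then mu σ lam else 0) := by
        refine Finset.sum_congr rfl fun k hk => Finset.sum_congr rfl fun lam _ => h2 k hk lam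
    _ = -(∑ k ∈ Finset.range (n + 1), ∑ lam : Equiv.Perm (Fin k),
          (if PermLE σ lam ∧ PermLE lam (red π S) then mu σ lam else 0)) := by
        rw [← Finset.sum_neg_distrib]
        exact Finset.sum_congr rfl fun k _ => by rw [← Finset.sum_neg_distrib]
    _ = -(if IsEmb π S σ then 1 else 0) := by
        rw [deltaA σ π (fun {a b} => mu) hmu_self hmu_rec S]

lemma coeff_one {n : ℕ} (π : Equiv.Perm (Fin n)) {T : Finset (Fin n)}
    (hTu : T ≠ Finset.univ) (hTr : ReprP π T) :
    ∑ S : Finset (Fin n), (if T ⊆ S ∧ S ≠ Finset.univ then cfun π S else 0) = 1 := by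
  classical
  set B : Finset (Fin n) := T ∪ Finset.univ.filter (fun p => tailPos π p) with hBdef
  have hB : B ≠ Finset.univ := by
    intro hBu
    apply hTu
    apply repr_univ_of_heads hTr
    intro p hp
    have hpB : p ∈ B := hBu ▸ Finset.mem_univ p
    rw [hBdef, Finset.mem_union, Finset.mem_filter] at hpB
    rcases hpB with h | h
    · exact h
    · exact absurd h.2 hp
  have hterm : ∀ S : Finset (Fin n),
      (if T ⊆ S ∧ S ≠ Finset.univ then cfun π S else 0)
      = (if B ⊆ S ∧ S ≠ Finset.univ then -(-1 : ℤ) ^ (n - S.card) else 0) := by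
    intro S
    unfold cfun
    have hiff : (T ⊆ S ∧ (∀ p, tailPos π p → p ∈ S)) ↔ B ⊆ S := by
      rw [hBdef, Finset.union_subset_iff]
      constructor
      · rintro ⟨h1, h2⟩
        refine ⟨h1, fun p hp => ?_⟩
        rw [Finset.mem_filter] at hp
        exact h2 p hp.2
      · rintro ⟨h1, h2⟩
        exact ⟨h1, fun p hp => h2 (Finset.mem_filter.2 ⟨Finset.mem_univ p, hp⟩)⟩
    by_cases h2 : S ≠ Finset.univ
    · by_cases h1 : T ⊆ S
      · by_cases h3 : ∀ p, tailPos π p → p ∈ S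
        · rw [if_pos ⟨h1, h2⟩, if_pos h3, if_pos ⟨hiff.1 ⟨h1, h3⟩, h2⟩]
        · rw [if_pos ⟨h1, h2⟩, if_neg h3, if_neg (fun hc => h3 (hiff.2 hc.1).2)]
      · rw [if_neg (fun hc => h1 hc.1), if_neg (fun hc => h1 (hiff.2 hc.1).1)]
    · rw [if_neg (fun hc => h2 hc.2), if_neg (fun hc => h2 hc.2)]
  rw [Finset.sum_congr rfl (fun S _ => hterm S), ← Finset.sum_filter]
  have halt := alt_sum_proper hB
  rw [Finset.sum_neg_distrib, halt]
  norm_num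

lemma GG_total {m n : ℕ} (σ : Equiv.Perm (Fin m)) (π : Equiv.Perm (Fin n))
    (mu : ∀ {a b : ℕ}, Equiv.Perm (Fin a) → Equiv.Perm (Fin b) → ℤ)
    (hmu_self : ∀ {a : ℕ} (τ : Equiv.Perm (Fin a)), mu τ τ = 1)
    (hmu_rec : ∀ {a b : ℕ} (τ : Equiv.Perm (Fin a)) (ρ : Equiv.Perm (Fin b)),
      PermLT τ ρ → ∑ k ∈ Finset.range (b + 1), ∑ lam : Equiv.Perm (Fin k),
        (if PermLE τ lam ∧ PermLE lam ρ then mu τ lam else 0) = 0)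
    (hmn : m < n) :
    ∑ S : Finset (Fin n), GGfun σ π mu S = (-1 : ℤ) ^ (n - m) * (permNE σ π : ℤ) := by
  classical
  have way1 : ∑ S : Finset (Fin n), (if S ≠ Finset.univ then
        cfun π S * (∑ T ∈ S.powerset, GGfun σ π mu T) else 0)
      = (-1 : ℤ) ^ (n - m) * (permNE σ π : ℤ) := by
    have hterm : ∀ S : Finset (Fin n), (if S ≠ Finset.univ then
        cfun π S * (∑ T ∈ S.powerset, GGfun σ π mu T) else 0)
        = (if IsNormalEmb π S σ then (-1 : ℤ) ^ (n - m) else 0) := by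
      intro S
      by_cases h2 : S ≠ Finset.univ
      · rw [if_pos h2]
        by_cases h3 : ∀ p, tailPos π p → p ∈ S
        · rw [GG_powerset σ π (fun {a b} => mu) hmu_self hmu_rec h2 (norm_reprP h3)]
          unfold cfun
          rw [if_pos h3]
          by_cases h4 : IsEmb π S σ
          · rw [if_pos h4, if_pos ⟨h4, h3⟩]
            obtain ⟨hc, -⟩ := h4
            rw [hc]
            ring
          · rw [if_neg h4, if_neg (fun hc => h4 hc.1)]
            ring
        · unfold cfun
          rw [if_neg h3, zero_mul, if_neg (fun hc => h3 hc.2)]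
      · rw [if_neg h2]
        push_neg at h2
        rw [if_neg]
        intro hne
        obtain ⟨hc, -⟩ := hne.1
        rw [h2] at hc
        simp only [Finset.card_univ, Fintype.card_fin] at hc
        omega
    rw [Finset.sum_congr rfl (fun S _ => hterm S), ← Finset.sum_filter,
      Finset.sum_const, nsmul_eq_mul]
    rw [mul_comm]
    unfold permNE
    congr 2
  have way2 : ∑ S : Finset (Fin n), (if S ≠ Finset.univ then
        cfun π S * (∑ T ∈ S.powerset, GGfun σ π mu T) else 0)
      = ∑ T : Finset (Fin n), GGfun σ π mu T := by
    have h1 : ∀ S : Finset (Fin n), (if S ≠ Finset.univ then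
        cfun π S * (∑ T ∈ S.powerset, GGfun σ π mu T) else 0)
        = ∑ T : Finset (Fin n),
            (if T ⊆ S ∧ S ≠ Finset.univ then cfun π S * GGfun σ π mu T else 0) := by
      intro S
      have hpow : ∑ T ∈ S.powerset, GGfun σ π mu T
          = ∑ T : Finset (Fin n), (if T ⊆ S then GGfun σ π mu T else 0) := by
        rw [← Finset.sum_filter]
        apply Finset.sum_congr
        · ext T; simp [Finset.mem_powerset]
        · intros; rfl
      by_cases h2 : S ≠ Finset.univ
      · rw [if_pos h2, hpow, Finset.mul_sum]
        apply Finset.sum_congr rfl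
        intro T _
        by_cases h3 : T ⊆ S
        · rw [if_pos h3, if_pos ⟨h3, h2⟩]
        · rw [if_neg h3, mul_zero, if_neg (fun hc => h3 hc.1)]
      · rw [if_neg h2]
        symm
        apply Finset.sum_eq_zero
        intro T _
        rw [if_neg (fun hc => h2 hc.2)]
    rw [Finset.sum_congr rfl (fun S _ => h1 S), Finset.sum_comm]
    apply Finset.sum_congr rfl
    intro T _
    have h2 : ∑ S : Finset (Fin n),
          (if T ⊆ S ∧ S ≠ Finset.univ then cfun π S * GGfun σ π mu T else 0)
        = (∑ S : Finset (Fin n), (if T ⊆ S ∧ S ≠ Finset.univ then cfun π S else 0))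
            * GGfun σ π mu T := by
      rw [Finset.sum_mul]
      apply Finset.sum_congr rfl
      intro S _
      by_cases h3 : T ⊆ S ∧ S ≠ Finset.univ
      · rw [if_pos h3, if_pos h3]
      · rw [if_neg h3, if_neg h3, zero_mul]
    rw [h2]
    by_cases h3 : T ≠ Finset.univ ∧ ReprP π T
    · rw [coeff_one π h3.1 h3.2, one_mul]
    · rw [GG_zero σ π (fun {a b} => mu) h3, mul_zero]
  rw [← way2, way1]

end AuxGG
/-- For permutations `σ < π` in the classical permutation pattern order,
`μ(σ,π) = (−1)^{n−m} NE(σ,π) + ∑_{σ ≤ λ < π} μ(σ,λ) · μ(0̂,1̂ in R̂*(λ,π))`.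
The Möbius function `mu` of the pattern order is characterised by its defining
recurrence. -/
theorem stmt3 {m n : ℕ} (σ : Equiv.Perm (Fin m)) (π : Equiv.Perm (Fin n))
    (mu : ∀ {a b : ℕ}, Equiv.Perm (Fin a) → Equiv.Perm (Fin b) → ℤ)
    (hmu_self : ∀ {a : ℕ} (τ : Equiv.Perm (Fin a)), mu τ τ = 1)
    (hmu_rec : ∀ {a b : ℕ} (τ : Equiv.Perm (Fin a)) (ρ : Equiv.Perm (Fin b)),
      PermLT τ ρ →
      ∑ k ∈ Finset.range (b + 1), ∑ lam : Equiv.Perm (Fin k),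
        (if PermLE τ lam ∧ PermLE lam ρ then mu τ lam else 0) = 0)
    (h : PermLT σ π) :
    mu σ π = (-1) ^ (n - m) * (permNE σ π : ℤ) +
      ∑ k ∈ Finset.range (n + 1), ∑ lam : Equiv.Perm (Fin k),
        (if PermLE σ lam ∧ PermLE lam π ∧ ¬(k = n ∧ HEq lam π) then
          mu σ lam * mobHat (RstarP π lam) else 0) := by
  classical
  have hmn : m < n := by
    have h1 : m ≤ n := permLE_card_le h.1
    rcases eq_or_lt_of_le h1 with h2 | h2
    · exfalso
      subst h2
      apply h.2
      rw [← permLE_antisymm h.1]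
      exact permLE_refl σ
    · exact h2
  have hMempty : mobHat (RstarP π π) = -1 := by
    apply mobhat_empty
    constructor
    rintro ⟨S, hSu, -, hSle⟩
    have h1 := permLE_card_le hSle
    have h2 : S.card < n := by
      have := (Finset.card_lt_iff_ne_univ S).2 hSu
      simpa using this
    omega
  have hrec0 := hmu_rec σ π h
  -- split off the top term from the full sum
  have hB : ∑ k ∈ Finset.range (n + 1), ∑ lam : Equiv.Perm (Fin k),
      (if PermLE σ lam ∧ PermLE lam π then mu σ lam else 0)
      = mu σ π + ∑ k ∈ Finset.range (n + 1), ∑ lam : Equiv.Perm (Fin k),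
        (if PermLE σ lam ∧ PermLE lam π ∧ ¬(k = n ∧ HEq lam π) then mu σ lam else 0) := by
    have hsplit : ∀ k ∈ Finset.range (n + 1), ∀ lam : Equiv.Perm (Fin k),
        (if PermLE σ lam ∧ PermLE lam π then mu σ lam else 0)
        = (if PermLE σ lam ∧ PermLE lam π ∧ (k = n ∧ HEq lam π) then mu σ lam else 0)
          + (if PermLE σ lam ∧ PermLE lam π ∧ ¬(k = n ∧ HEq lam π) then mu σ lam else 0) := by
      intro k _ lam
      by_cases hc : PermLE σ lam ∧ PermLE lam π
      · by_cases ht : k = n ∧ HEq lam π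
        · rw [if_pos hc, if_pos ⟨hc.1, hc.2, ht⟩, if_neg (fun hx => hx.2.2 ht), add_zero]
        · rw [if_pos hc, if_neg (fun hx => ht hx.2.2), if_pos ⟨hc.1, hc.2, ht⟩, zero_add]
      · rw [if_neg hc, if_neg (fun hx => hc ⟨hx.1, hx.2.1⟩),
          if_neg (fun hx => hc ⟨hx.1, hx.2.1⟩), add_zero]
    rw [Finset.sum_congr rfl (fun k hk => Finset.sum_congr rfl (fun lam _ => hsplit k hk lam))]
    rw [Finset.sum_congr rfl (fun k _ => Finset.sum_add_distrib), Finset.sum_add_distrib]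
    congr 1
    rw [Finset.sum_eq_single_of_mem n (by simp)]
    · rw [Finset.sum_eq_single_of_mem π (Finset.mem_univ π)]
      · rw [if_pos ⟨h.1, permLE_refl π, rfl, HEq.rfl⟩]
      · intro lam _ hne
        rw [if_neg]
        rintro ⟨-, -, -, hheq⟩
        exact hne (eq_of_heq hheq)
    · intro k _ hkn
      apply Finset.sum_eq_zero
      intro lam _
      rw [if_neg]
      rintro ⟨-, -, hk, -⟩
      exact hkn hk
  -- Claim X : the sum weighted by (mobHat + 1)
  have claimX : ∑ k ∈ Finset.range (n + 1), ∑ lam : Equiv.Perm (Fin k),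
      (if PermLE σ lam ∧ PermLE lam π ∧ ¬(k = n ∧ HEq lam π) then
        mu σ lam * (mobHat (RstarP π lam) + 1) else 0)
      = -((-1 : ℤ) ^ (n - m) * (permNE σ π : ℤ)) := by
    have hstep1 : ∀ k ∈ Finset.range (n + 1), ∀ lam : Equiv.Perm (Fin k),
        (if PermLE σ lam ∧ PermLE lam π ∧ ¬(k = n ∧ HEq lam π) then
          mu σ lam * (mobHat (RstarP π lam) + 1) else 0)
        = (if PermLE σ lam ∧ PermLE lam π then
            mu σ lam * (mobHat (RstarP π lam) + 1) else 0) := by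
      intro k _ lam
      by_cases ht : k = n ∧ HEq lam π
      · obtain ⟨hk, hheq⟩ := ht
        subst hk
        have hlam : lam = π := eq_of_heq hheq
        subst hlam
        rw [if_neg (fun hx => hx.2.2 ⟨rfl, HEq.rfl⟩)]
        by_cases hc : PermLE σ lam ∧ PermLE lam lam
        · rw [if_pos hc, hMempty]
          ring
        · rw [if_neg hc]
      · by_cases hc : PermLE σ lam ∧ PermLE lam π
        · rw [if_pos ⟨hc.1, hc.2, ht⟩, if_pos hc]
        · rw [if_neg (fun hx => hc ⟨hx.1, hx.2.1⟩), if_neg hc]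
    rw [Finset.sum_congr rfl (fun k hk => Finset.sum_congr rfl fun lam _ => hstep1 k hk lam)]
    have hstep2 : ∀ (k : ℕ) (lam : Equiv.Perm (Fin k)),
        (if PermLE σ lam ∧ PermLE lam π then mu σ lam * (mobHat (RstarP π lam) + 1) else 0)
        = -∑ S : Finset (Fin n),
            (if PermLE σ lam ∧ PermLE lam π then mu σ lam * gfun π lam S else 0) := by
      intro k lam
      by_cases hc : PermLE σ lam ∧ PermLE lam π
      · rw [if_pos hc]
        have hmh : mobHat (RstarP π lam) + 1 = -∑ S : Finset (Fin n), gfun π lam S := by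
          rw [mobhat_eq, gfun_sum]
          ring
        rw [hmh, mul_neg, Finset.mul_sum]
        congr 1
        exact Finset.sum_congr rfl fun S _ => (if_pos hc).symm
      · rw [if_neg hc]
        symm
        rw [neg_eq_zero]
        exact Finset.sum_eq_zero fun S _ => if_neg hc
    rw [Finset.sum_congr rfl (fun k _ => Finset.sum_congr rfl fun lam _ => hstep2 k lam)]
    rw [Finset.sum_congr rfl (fun k _ => Finset.sum_neg_distrib _), Finset.sum_neg_distrib]
    congr 1
    rw [Finset.sum_congr rfl (fun k _ => Finset.sum_comm), Finset.sum_comm]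
    exact GG_total σ π (fun {a b} => mu) hmu_self hmu_rec hmn
  -- arithmetic conclusion
  have hDB : ∑ k ∈ Finset.range (n + 1), ∑ lam : Equiv.Perm (Fin k),
      (if PermLE σ lam ∧ PermLE lam π ∧ ¬(k = n ∧ HEq lam π) then
        mu σ lam * (mobHat (RstarP π lam) + 1) else 0)
      = (∑ k ∈ Finset.range (n + 1), ∑ lam : Equiv.Perm (Fin k),
          (if PermLE σ lam ∧ PermLE lam π ∧ ¬(k = n ∧ HEq lam π) then
            mu σ lam * mobHat (RstarP π lam) else 0))
        + ∑ k ∈ Finset.range (n + 1), ∑ lam : Equiv.Perm (Fin k),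
          (if PermLE σ lam ∧ PermLE lam π ∧ ¬(k = n ∧ HEq lam π) then mu σ lam else 0) := by
    rw [← Finset.sum_add_distrib]
    apply Finset.sum_congr rfl
    intro k _
    rw [← Finset.sum_add_distrib]
    apply Finset.sum_congr rfl
    intro lam _
    by_cases hc : PermLE σ lam ∧ PermLE lam π ∧ ¬(k = n ∧ HEq lam π)
    · rw [if_pos hc, if_pos hc, if_pos hc]
      ring
    · rw [if_neg hc, if_neg hc, if_neg hc, add_zero]
  linarith [hrec0, hB, claimX, hDB]
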